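/- If X = D ×₁ U ×₂ V ×₃ W is a Tucker decomposition of X with factor matrices U, V, W of full column rank, then TriRank(X) = TriRank(D). -/

import Mathlib

open Matrix

noncomputable def tripleProd {n1 n2 n3 r : ℕ}
    (A : Fin n1 → Fin r → Fin r → ℝ) (B : Fin r → Fin n2 → Fin r → ℝ)
    (C : Fin r → Fin r → Fin n3 → ℝ) : Fin n1 → Fin n2 → Fin n3 → ℝ :=
  fun i j t => ∑ p : Fin r, ∑ q : Fin r, ∑ s : Fin r, A i q s * B p j s * C p q t

noncomputable def TriRank {n1 n2 n3 : ℕ} (X : Fin n1 → Fin n2 → Fin n3 → ℝ) : ℕ :=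
  sInf {r : ℕ | ∃ (A : Fin n1 → Fin r → Fin r → ℝ) (B : Fin r → Fin n2 → Fin r → ℝ)
    (C : Fin r → Fin r → Fin n3 → ℝ), X = tripleProd A B C}

noncomputable def CPRank {n1 n2 n3 : ℕ} (X : Fin n1 → Fin n2 → Fin n3 → ℝ) : ℕ :=
  sInf {r : ℕ | ∃ (A : Fin n1 → Fin r → ℝ) (B : Fin n2 → Fin r → ℝ) (C : Fin n3 → Fin r → ℝ),
    X = fun i j t => ∑ p : Fin r, A i p * B j p * C t p}

def mid (a b c : ℕ) : ℕ := max (min a b) (min (max a b) c)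

noncomputable def mode1 {m' m n k : ℕ} (U : Matrix (Fin m') (Fin m) ℝ)
    (D : Fin m → Fin n → Fin k → ℝ) : Fin m' → Fin n → Fin k → ℝ :=
  fun i j t => ∑ p : Fin m, U i p * D p j t

noncomputable def mode2 {m n' n k : ℕ} (V : Matrix (Fin n') (Fin n) ℝ)
    (D : Fin m → Fin n → Fin k → ℝ) : Fin m → Fin n' → Fin k → ℝ :=
  fun i j t => ∑ q : Fin n, V j q * D i q t

noncomputable def mode3 {m n k' k : ℕ} (W : Matrix (Fin k') (Fin k) ℝ)
    (D : Fin m → Fin n → Fin k → ℝ) : Fin m → Fin n → Fin k' → ℝ :=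
  fun i j t => ∑ s : Fin k, W t s * D i j s

noncomputable def tucker {n1 n2 n3 r1 r2 r3 : ℕ} (U : Matrix (Fin n1) (Fin r1) ℝ)
    (V : Matrix (Fin n2) (Fin r2) ℝ) (W : Matrix (Fin n3) (Fin r3) ℝ)
    (D : Fin r1 → Fin r2 → Fin r3 → ℝ) : Fin n1 → Fin n2 → Fin n3 → ℝ :=
  mode1 U (mode2 V (mode3 W D))

def unfold1 {a b c : ℕ} (T : Fin a → Fin b → Fin c → ℝ) : Matrix (Fin a) (Fin b × Fin c) ℝ :=
  fun i jt => T i jt.1 jt.2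
def unfold2 {a b c : ℕ} (T : Fin a → Fin b → Fin c → ℝ) : Matrix (Fin b) (Fin a × Fin c) ℝ :=
  fun j it => T it.1 j it.2
def unfold3 {a b c : ℕ} (T : Fin a → Fin b → Fin c → ℝ) : Matrix (Fin c) (Fin a × Fin b) ℝ :=
  fun t ij => T ij.1 ij.2 t
-- sum reordering helper
lemma sum4 {α β γ δ : Type*} [Fintype α] [Fintype β] [Fintype γ] [Fintype δ]
    (f : α → β → γ → δ → ℝ) :
    ∑ a, ∑ p, ∑ q, ∑ s, f a p q s = ∑ p, ∑ q, ∑ s, ∑ a, f a p q s := by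
  rw [Finset.sum_comm]
  exact Finset.sum_congr rfl fun p _ => Finset.sum_comm.trans
    (Finset.sum_congr rfl fun q _ => Finset.sum_comm)

lemma mode1_tripleProd {n1 n1' n2 n3 r : ℕ} (U : Matrix (Fin n1') (Fin n1) ℝ)
    (A : Fin n1 → Fin r → Fin r → ℝ) (B : Fin r → Fin n2 → Fin r → ℝ)
    (C : Fin r → Fin r → Fin n3 → ℝ) :
    mode1 U (tripleProd A B C)
      = tripleProd (fun i q s => ∑ a, U i a * A a q s) B C := by
  funext i j t
  simp only [mode1, tripleProd, Finset.mul_sum, Finset.sum_mul]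
  rw [sum4]
  exact Finset.sum_congr rfl fun p _ => Finset.sum_congr rfl fun q _ =>
    Finset.sum_congr rfl fun s _ => Finset.sum_congr rfl fun a _ => by ring

lemma mode2_tripleProd {n1 n2 n2' n3 r : ℕ} (V : Matrix (Fin n2') (Fin n2) ℝ)
    (A : Fin n1 → Fin r → Fin r → ℝ) (B : Fin r → Fin n2 → Fin r → ℝ)
    (C : Fin r → Fin r → Fin n3 → ℝ) :
    mode2 V (tripleProd A B C)
      = tripleProd A (fun p j s => ∑ b, V j b * B p b s) C := by
  funext i j t
  simp only [mode2, tripleProd, Finset.mul_sum, Finset.sum_mul]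
  rw [sum4]
  exact Finset.sum_congr rfl fun p _ => Finset.sum_congr rfl fun q _ =>
    Finset.sum_congr rfl fun s _ => Finset.sum_congr rfl fun b _ => by ring

lemma mode3_tripleProd {n1 n2 n3 n3' r : ℕ} (W : Matrix (Fin n3') (Fin n3) ℝ)
    (A : Fin n1 → Fin r → Fin r → ℝ) (B : Fin r → Fin n2 → Fin r → ℝ)
    (C : Fin r → Fin r → Fin n3 → ℝ) :
    mode3 W (tripleProd A B C)
      = tripleProd A B (fun p q t => ∑ c, W t c * C p q c) := by
  funext i j t
  simp only [mode3, tripleProd, Finset.mul_sum, Finset.sum_mul]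
  rw [sum4]
  exact Finset.sum_congr rfl fun p _ => Finset.sum_congr rfl fun q _ =>
    Finset.sum_congr rfl fun s _ => Finset.sum_congr rfl fun c _ => by ring

lemma tucker_tripleProd {n1 n2 n3 r1 r2 r3 r : ℕ} (U : Matrix (Fin n1) (Fin r1) ℝ)
    (V : Matrix (Fin n2) (Fin r2) ℝ) (W : Matrix (Fin n3) (Fin r3) ℝ)
    (A : Fin r1 → Fin r → Fin r → ℝ) (B : Fin r → Fin r2 → Fin r → ℝ)
    (C : Fin r → Fin r → Fin r3 → ℝ) :
    ∃ (A' : Fin n1 → Fin r → Fin r → ℝ) (B' : Fin r → Fin n2 → Fin r → ℝ)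
      (C' : Fin r → Fin r → Fin n3 → ℝ),
      tucker U V W (tripleProd A B C) = tripleProd A' B' C' := by
  refine ⟨fun i q s => ∑ a, U i a * A a q s, fun p j s => ∑ b, V j b * B p b s,
    fun p q t => ∑ c, W t c * C p q c, ?_⟩
  rw [tucker, mode3_tripleProd, mode2_tripleProd, mode1_tripleProd]

-- composition facts
lemma mode1_mode1 {m'' m' m n k : ℕ} (U2 : Matrix (Fin m'') (Fin m') ℝ)
    (U1 : Matrix (Fin m') (Fin m) ℝ) (D : Fin m → Fin n → Fin k → ℝ) :
    mode1 U2 (mode1 U1 D) = mode1 (U2 * U1) D := by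
  funext i j t
  simp only [mode1, Matrix.mul_apply, Finset.mul_sum, Finset.sum_mul]
  rw [Finset.sum_comm]
  exact Finset.sum_congr rfl fun p _ => Finset.sum_congr rfl fun q _ => by ring

lemma mode2_mode2 {m n'' n' n k : ℕ} (V2 : Matrix (Fin n'') (Fin n') ℝ)
    (V1 : Matrix (Fin n') (Fin n) ℝ) (D : Fin m → Fin n → Fin k → ℝ) :
    mode2 V2 (mode2 V1 D) = mode2 (V2 * V1) D := by
  funext i j t
  simp only [mode2, Matrix.mul_apply, Finset.mul_sum, Finset.sum_mul]
  rw [Finset.sum_comm]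
  exact Finset.sum_congr rfl fun p _ => Finset.sum_congr rfl fun q _ => by ring

lemma mode3_mode3 {m n k'' k' k : ℕ} (W2 : Matrix (Fin k'') (Fin k') ℝ)
    (W1 : Matrix (Fin k') (Fin k) ℝ) (D : Fin m → Fin n → Fin k → ℝ) :
    mode3 W2 (mode3 W1 D) = mode3 (W2 * W1) D := by
  funext i j t
  simp only [mode3, Matrix.mul_apply, Finset.mul_sum, Finset.sum_mul]
  rw [Finset.sum_comm]
  exact Finset.sum_congr rfl fun p _ => Finset.sum_congr rfl fun q _ => by ring

lemma mode2_mode1 {m' m n' n k : ℕ} (V : Matrix (Fin n') (Fin n) ℝ)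
    (U : Matrix (Fin m') (Fin m) ℝ) (D : Fin m → Fin n → Fin k → ℝ) :
    mode2 V (mode1 U D) = mode1 U (mode2 V D) := by
  funext i j t
  simp only [mode1, mode2, Finset.mul_sum]
  rw [Finset.sum_comm]
  exact Finset.sum_congr rfl fun p _ => Finset.sum_congr rfl fun q _ => by ring

lemma mode3_mode1 {m' m n k' k : ℕ} (W : Matrix (Fin k') (Fin k) ℝ)
    (U : Matrix (Fin m') (Fin m) ℝ) (D : Fin m → Fin n → Fin k → ℝ) :
    mode3 W (mode1 U D) = mode1 U (mode3 W D) := by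
  funext i j t
  simp only [mode1, mode3, Finset.mul_sum]
  rw [Finset.sum_comm]
  exact Finset.sum_congr rfl fun p _ => Finset.sum_congr rfl fun q _ => by ring

lemma mode3_mode2 {m n' n k' k : ℕ} (W : Matrix (Fin k') (Fin k) ℝ)
    (V : Matrix (Fin n') (Fin n) ℝ) (D : Fin m → Fin n → Fin k → ℝ) :
    mode3 W (mode2 V D) = mode2 V (mode3 W D) := by
  funext i j t
  simp only [mode2, mode3, Finset.mul_sum]
  rw [Finset.sum_comm]
  exact Finset.sum_congr rfl fun p _ => Finset.sum_congr rfl fun q _ => by ring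

lemma tucker_tucker {n1 n2 n3 m1 m2 m3 r1 r2 r3 : ℕ}
    (U2 : Matrix (Fin n1) (Fin m1) ℝ) (V2 : Matrix (Fin n2) (Fin m2) ℝ)
    (W2 : Matrix (Fin n3) (Fin m3) ℝ)
    (U1 : Matrix (Fin m1) (Fin r1) ℝ) (V1 : Matrix (Fin m2) (Fin r2) ℝ)
    (W1 : Matrix (Fin m3) (Fin r3) ℝ) (D : Fin r1 → Fin r2 → Fin r3 → ℝ) :
    tucker U2 V2 W2 (tucker U1 V1 W1 D) = tucker (U2 * U1) (V2 * V1) (W2 * W1) D := by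
  unfold tucker
  rw [mode3_mode1, mode3_mode2, mode2_mode1, mode3_mode3, mode2_mode2, mode1_mode1]

lemma mode1_one {m n k : ℕ} (D : Fin m → Fin n → Fin k → ℝ) : mode1 1 D = D := by
  funext i j t
  simp [mode1, Matrix.one_apply]

lemma mode2_one {m n k : ℕ} (D : Fin m → Fin n → Fin k → ℝ) : mode2 1 D = D := by
  funext i j t
  simp [mode2, Matrix.one_apply]

lemma mode3_one {m n k : ℕ} (D : Fin m → Fin n → Fin k → ℝ) : mode3 1 D = D := by
  funext i j t
  simp [mode3, Matrix.one_apply]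

lemma isUnit_of_rank_sq {r : ℕ} (M : Matrix (Fin r) (Fin r) ℝ) (h : M.rank = r) : IsUnit M := by
  rw [← Matrix.mulVec_surjective_iff_isUnit]
  have : LinearMap.range M.mulVecLin = ⊤ :=
    Submodule.eq_top_of_finrank_eq (by simpa [Matrix.rank] using h)
  intro y
  obtain ⟨x, hx⟩ := LinearMap.range_eq_top.mp this y
  exact ⟨x, hx⟩

lemma exists_left_inv {n r : ℕ} (U : Matrix (Fin n) (Fin r) ℝ) (h : U.rank = r) :
    ∃ U' : Matrix (Fin r) (Fin n) ℝ, U' * U = 1 := by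
  have hsq : (Uᵀ * U).rank = r := by rw [Matrix.rank_transpose_mul_self, h]
  obtain ⟨B, hB⟩ : ∃ B : Matrix (Fin r) (Fin r) ℝ, B * (Uᵀ * U) = 1 :=
    ⟨_, Matrix.nonsing_inv_mul _ ((Matrix.isUnit_iff_isUnit_det _).mp (isUnit_of_rank_sq _ hsq))⟩
  exact ⟨B * Uᵀ, by rw [Matrix.mul_assoc]; exact hB⟩


theorem stmt7 {n1 n2 n3 r1 r2 r3 : ℕ}
    (U : Matrix (Fin n1) (Fin r1) ℝ) (V : Matrix (Fin n2) (Fin r2) ℝ)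
    (W : Matrix (Fin n3) (Fin r3) ℝ) (D : Fin r1 → Fin r2 → Fin r3 → ℝ)
    (X : Fin n1 → Fin n2 → Fin n3 → ℝ) (hX : X = tucker U V W D)
    (hU : U.rank = r1) (hV : V.rank = r2) (hW : W.rank = r3) :
    TriRank X = TriRank D := by
  obtain ⟨U', hU'⟩ := exists_left_inv U hU
  obtain ⟨V', hV'⟩ := exists_left_inv V hV
  obtain ⟨W', hW'⟩ := exists_left_inv W hW
  have hD : D = tucker U' V' W' X := by
    rw [hX, tucker_tucker, hU', hV', hW']
    rw [tucker, mode3_one, mode2_one, mode1_one]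
  unfold TriRank
  congr 1
  ext r
  constructor
  · rintro ⟨A, B, C, h⟩
    obtain ⟨A', B', C', h'⟩ := tucker_tripleProd U' V' W' A B C
    exact ⟨A', B', C', by rw [hD, h, h']⟩
  · rintro ⟨A, B, C, h⟩
    obtain ⟨A', B', C', h'⟩ := tucker_tripleProd U V W A B C
    exact ⟨A', B', C', by rw [hX, h, h']⟩
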